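/- Let A be a measurable set with μ(A) < ∞ and let (A_n)_{n≥1} be a sequence of measurable sets such that (A_n) →_μ A and μ(A_n △ A_m) ≤ 2^{-n} for all n < m, where △ denotes symmetric difference. Then μ(A △ liminf_n A_n) = 0 and μ(A △ limsup_n A_n) = 0, where liminf_n A_n = ⋃_n ⋂_{m≥n} A_m and limsup_n A_n = ⋂_n ⋃_{m≥n} A_m. -/

import Mathlib

open MeasureTheory Filter Set
open scoped ENNReal

/-- The limit relation `→_μ`: `(A n) →_μ L` iff `μ (A n \ L) → 0` and, for every
measurable `B` of finite measure, `μ ((L ∩ B) \ A n) → 0`. -/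
def ConvMu {Ω : Type*} [MeasurableSpace Ω] (μ : Measure Ω)
    (A : ℕ → Set Ω) (L : Set Ω) : Prop :=
  Tendsto (fun n => μ (A n \ L)) atTop (nhds 0) ∧
    ∀ B : Set Ω, MeasurableSet B → μ B < ⊤ →
      Tendsto (fun n => μ ((L ∩ B) \ A n)) atTop (nhds 0)

/-- If `μ A < ∞`, `(A n) →_μ A` and `μ (A n ∆ A m) ≤ 2⁻ⁿ` for all
`1 ≤ n < m`, then `A` equals both `liminf A n` and `limsup A n` up to `μ`-null sets. -/
theorem statement1 {Ω : Type*} [MeasurableSpace Ω] (μ : Measure Ω)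
    (A : Set Ω) (hA : MeasurableSet A) (hAfin : μ A < ⊤)
    (Aseq : ℕ → Set Ω) (hAseq : ∀ n, MeasurableSet (Aseq n))
    (hconv : ConvMu μ Aseq A)
    (hcauchy : ∀ n m, 1 ≤ n → n < m →
      μ (symmDiff (Aseq n) (Aseq m)) ≤ (2 : ℝ≥0∞)⁻¹ ^ n) :
    μ (symmDiff A (⋃ n, ⋂ m, ⋂ _ : n ≤ m, Aseq m)) = 0 ∧
    μ (symmDiff A (⋂ n, ⋃ m, ⋃ _ : n ≤ m, Aseq m)) = 0 := by
  set L : Set Ω := ⋃ n, ⋂ m, ⋂ _ : n ≤ m, Aseq m with hLdef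
  set U : Set Ω := ⋂ n, ⋃ m, ⋃ _ : n ≤ m, Aseq m with hUdef
  set S : ℕ → Set Ω := fun n => ⋃ j : ℕ, symmDiff (Aseq (n + j)) (Aseq (n + j + 1))
    with hSdef
  -- no-flip implies constant membership
  have hflip : ∀ n (x : Ω), x ∉ S n → ∀ m, n ≤ m → (x ∈ Aseq m ↔ x ∈ Aseq n) := by
    intro n x hx m hm
    induction m, hm using Nat.le_induction with
    | base => rfl
    | succ m hm ih =>
      have hmem : x ∉ symmDiff (Aseq m) (Aseq (m + 1)) := by
        intro h
        refine hx (mem_iUnion.2 ⟨m - n, ?_⟩)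
        rwa [Nat.add_sub_cancel' hm]
      rw [Set.mem_symmDiff] at hmem
      push_neg at hmem
      exact ⟨fun h1 => ih.mp (hmem.2 h1), fun h1 => hmem.1 (ih.mpr h1)⟩
  -- μ (A \ Aseq n) → 0
  have htendA : Tendsto (fun n => μ (A \ Aseq n)) atTop (nhds 0) := by
    have := hconv.2 A hA hAfin
    simpa [Set.inter_self] using this
  -- geometric bound on S n
  have hS : ∀ n, 1 ≤ n → μ (S n) ≤ (2 : ℝ≥0∞)⁻¹ ^ n * 2 := by
    intro n hn
    calc μ (S n) ≤ ∑' j : ℕ, μ (symmDiff (Aseq (n + j)) (Aseq (n + j + 1))) :=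
          measure_iUnion_le _
      _ ≤ ∑' j : ℕ, (2 : ℝ≥0∞)⁻¹ ^ (n + j) :=
          ENNReal.tsum_le_tsum fun j => hcauchy _ _ (le_add_right hn) (Nat.lt_succ_self _)
      _ = (2 : ℝ≥0∞)⁻¹ ^ n * 2 := by
          simp only [pow_add, ENNReal.tsum_mul_left, ENNReal.tsum_geometric,
            ENNReal.one_sub_inv_two]
          norm_num
  -- the auxiliary bound function tends to 0
  have htend2 : ∀ f : ℕ → ℝ≥0∞, Tendsto f atTop (nhds 0) →
      Tendsto (fun n => (2 : ℝ≥0∞)⁻¹ ^ n * 2 + f n) atTop (nhds 0) := by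
    intro f hf
    have hpow : Tendsto (fun n => (2 : ℝ≥0∞)⁻¹ ^ n * 2) atTop (nhds 0) := by
      have := ENNReal.Tendsto.mul_const
        (ENNReal.tendsto_pow_atTop_nhds_zero_of_lt_one
          (by norm_num : (2 : ℝ≥0∞)⁻¹ < 1)) (Or.inr (by norm_num : (2 : ℝ≥0∞) ≠ ⊤))
      simpa using this
    simpa using hpow.add hf
  -- μ (L \ A) = 0
  have hLA : μ (L \ A) = 0 := by
    rw [hLdef, Set.iUnion_diff]
    refine measure_iUnion_null fun n => le_antisymm ?_ zero_le
    refine ge_of_tendsto hconv.1 ?_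
    filter_upwards [eventually_ge_atTop n] with m hm
    refine measure_mono (Set.diff_subset_diff_left ?_)
    exact Set.iInter₂_subset m hm
  -- U \ Aseq n ⊆ S n
  have hUS : ∀ n, U \ Aseq n ⊆ S n := by
    intro n x ⟨hxU, hxn⟩
    by_contra hxS
    obtain ⟨m, hm, hxm⟩ : ∃ m, n ≤ m ∧ x ∈ Aseq m := by
      have := hxU
      rw [hUdef, Set.mem_iInter] at this
      simpa [Set.mem_iUnion] using this n
    exact hxn ((hflip n x hxS m hm).mp hxm)
  -- Aseq n \ L ⊆ S n
  have hAsL : ∀ n, Aseq n \ L ⊆ S n := by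
    intro n x ⟨hxn, hxL⟩
    by_contra hxS
    refine hxL (Set.mem_iUnion.2 ⟨n, ?_⟩)
    simp only [Set.mem_iInter]
    intro m hm
    exact (hflip n x hxS m hm).mpr hxn
  -- μ (U \ A) = 0
  have hUA : μ (U \ A) = 0 := by
    refine le_antisymm ?_ zero_le
    refine ge_of_tendsto (htend2 _ hconv.1) ?_
    filter_upwards [eventually_ge_atTop 1] with n hn
    calc μ (U \ A) ≤ μ ((U \ Aseq n) ∪ (Aseq n \ A)) := by
          refine measure_mono fun x ⟨hxU, hxA⟩ => ?_
          by_cases hx : x ∈ Aseq n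
          · exact Or.inr ⟨hx, hxA⟩
          · exact Or.inl ⟨hxU, hx⟩
      _ ≤ μ (U \ Aseq n) + μ (Aseq n \ A) := measure_union_le _ _
      _ ≤ (2 : ℝ≥0∞)⁻¹ ^ n * 2 + μ (Aseq n \ A) :=
          add_le_add_left ((measure_mono (hUS n)).trans (hS n hn)) _
  -- μ (A \ L) = 0
  have hAL : μ (A \ L) = 0 := by
    refine le_antisymm ?_ zero_le
    refine ge_of_tendsto (htend2 _ htendA) ?_
    filter_upwards [eventually_ge_atTop 1] with n hn
    calc μ (A \ L) ≤ μ ((Aseq n \ L) ∪ (A \ Aseq n)) := by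
          refine measure_mono fun x ⟨hxA, hxL⟩ => ?_
          by_cases hx : x ∈ Aseq n
          · exact Or.inl ⟨hx, hxL⟩
          · exact Or.inr ⟨hxA, hx⟩
      _ ≤ μ (Aseq n \ L) + μ (A \ Aseq n) := measure_union_le _ _
      _ ≤ (2 : ℝ≥0∞)⁻¹ ^ n * 2 + μ (A \ Aseq n) :=
          add_le_add_left ((measure_mono (hAsL n)).trans (hS n hn)) _
  -- L ⊆ U
  have hLU : L ⊆ U := by
    intro x hx
    rw [hLdef, Set.mem_iUnion] at hx
    obtain ⟨n, hn⟩ := hx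
    rw [Set.mem_iInter] at hn
    rw [hUdef, Set.mem_iInter]
    intro k
    refine Set.mem_iUnion.2 ⟨max n k, Set.mem_iUnion.2 ⟨le_max_right n k, ?_⟩⟩
    exact Set.mem_iInter.1 (hn (max n k)) (le_max_left n k)
  have hAU : μ (A \ U) = 0 :=
    le_antisymm ((measure_mono (Set.diff_subset_diff_right hLU)).trans_eq hAL) zero_le
  constructor
  · rw [Set.symmDiff_def]
    exact measure_union_null hAL hLA
  · rw [Set.symmDiff_def]
    exact measure_union_null hAU hUA
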